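/- On the ribbon basis, B_q(R_I, R_J) = (R_{1I} + q^{|I|} R_{1▷I}) R_J / (q^{|I|+|J|+1} - 1), where 1▷I means the composition (1+i_1, i_2, ..., i_r). Consequently, the coefficients of g̃_n = (q;q)_n g_n on the ribbon basis lie in ℕ[q]. -/

import Mathlib

noncomputable section

open Finset

/-- Noncommutative symmetric functions over `ℚ(q)`: the monoid algebra of the free monoid
on integer letters; the word `I` indexes `S^I`. -/
abbrev NSym := MonoidAlgebra (RatFunc ℚ) (FreeMonoid ℕ)

/-- `S^I` for a word `I`. -/
def Sw (l : List ℕ) : NSym := MonoidAlgebra.single (FreeMonoid.ofList l) 1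

/-- The operator `Ω` on words: first part increased by 1 (`Ω S^∅ = S_1`); for a
composition `I`, `omegaW I` is also the composition `1 ▷ I = (1+i_1, i_2, …, i_r)`. -/
def omegaW : List ℕ → List ℕ
  | [] => [1]
  | a :: l => (a + 1) :: l

/-- All coarsenings of a composition (merging consecutive parts in all possible ways). -/
def coars : List ℕ → List (List ℕ)
  | [] => [[]]
  | [a] => [[a]]
  | a :: b :: l => ((coars (b :: l)).map (a :: ·)) ++ coars ((a + b) :: l)

/-- The ribbon basis expanded on the complete basis:
`R_I = Σ_{J coarser than I} (-1)^{ℓ(I)-ℓ(J)} S^J`. -/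
def Rib (I : List ℕ) : NSym :=
  ((coars I).map fun J => ((-1 : RatFunc ℚ) ^ (I.length - J.length)) • Sw J).sum

/-- The bilinear map `B_q` on the complete basis. -/
def Bq (x y : NSym) : NSym :=
  Finsupp.sum x.coeff fun I a => Finsupp.sum y.coeff fun J b =>
    (a * b * ((RatFunc.X : RatFunc ℚ) ^ (I.toList.sum + J.toList.sum + 1) - 1)⁻¹) •
      (Sw (1 :: (I.toList ++ J.toList)) +
        ((RatFunc.X : RatFunc ℚ) ^ I.toList.sum - 1) • Sw (omegaW (I.toList ++ J.toList)))

/-- `(q;q)_n = (q-1)(q^2-1)⋯(q^n-1)` with `q = X`. -/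
def qPoch (n : ℕ) : RatFunc ℚ := ∏ k ∈ Finset.Icc 1 n, ((RatFunc.X : RatFunc ℚ) ^ k - 1)

/-- The canonical image of a polynomial with natural coefficients in `ℚ(q)`. -/
def natPoly (p : Polynomial ℕ) : RatFunc ℚ :=
  algebraMap (Polynomial ℚ) (RatFunc ℚ) (p.map (Nat.castRingHom ℚ))


lemma Sw_mul (K L : List ℕ) : Sw K * Sw L = Sw (K ++ L) := by
  simp [Sw, MonoidAlgebra.single_mul_single]
lemma Sw_nil : Sw [] = 1 := rfl

def mf (a : ℕ) : List ℕ → List ℕ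
  | [] => [a]
  | b :: t => (a + b) :: t

def glue : List ℕ → List ℕ → List ℕ
  | [], B => B
  | [a], B => mf a B
  | a :: x :: A, B => a :: glue (x :: A) B

lemma coars_cons_cons (a b : ℕ) (l : List ℕ) :
    coars (a :: b :: l) = ((coars (b :: l)).map (a :: ·)) ++ coars ((a + b) :: l) := by
  rw [coars]

def sribL (ls : List (List ℕ)) : NSym :=
  (ls.map fun K => ((-1 : RatFunc ℚ) ^ K.length) • Sw K).sum

def srib (I : List ℕ) : NSym := sribL (coars I)

lemma sribL_append (l1 l2 : List (List ℕ)) : sribL (l1 ++ l2) = sribL l1 + sribL l2 := by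
  simp [sribL]

lemma sribL_map_cons (a : ℕ) (ls : List (List ℕ)) :
    sribL (ls.map (a :: ·)) = (-Sw [a]) * sribL ls := by
  induction ls with
  | nil => simp [sribL]
  | cons K t ih =>
      simp only [sribL, List.map_cons, List.sum_cons] at ih ⊢
      rw [ih]
      have : Sw [a] * Sw K = Sw (a :: K) := Sw_mul [a] K
      simp [pow_succ, mul_add, mul_smul_comm, ← this, mul_comm]

lemma srib_nil : srib [] = 1 := by
  simp [srib, sribL, coars, Sw_nil]

lemma srib_singleton (a : ℕ) : srib [a] = -Sw [a] := by
  simp [srib, sribL, coars]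

lemma srib_cons' (a : ℕ) (B : List ℕ) (hB : B ≠ []) :
    srib (a :: B) = -(Sw [a] * srib B) + srib (mf a B) := by
  cases B with
  | nil => exact absurd rfl hB
  | cons b t =>
      show sribL (coars (a :: b :: t)) = _
      show sribL (coars (a :: b :: t)) = _
      rw [coars_cons_cons, sribL_append, sribL_map_cons]
      simp [srib, mf, neg_mul]

lemma coars_facts : ∀ I : List ℕ, ∀ K ∈ coars I,
    K.sum = I.sum ∧ K.length ≤ I.length ∧ (I ≠ [] → K ≠ []) := by
  intro I
  induction I using coars.induct with
  | case1 => intro K hK; simp [coars] at hK; simp [hK]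
  | case2 a => intro K hK; simp [coars] at hK; simp [hK]
  | case3 a b l ih1 ih2 =>
      intro K hK
      rw [coars_cons_cons, List.mem_append] at hK
      rcases hK with hK | hK
      · rcases List.mem_map.mp hK with ⟨K', hK', rfl⟩
        obtain ⟨h1, h2, h3⟩ := ih1 K' hK'
        simp only [List.sum_cons, List.length_cons] at h1 h2 ⊢
        refine ⟨by omega, by omega, by simp⟩
      · obtain ⟨h1, h2, h3⟩ := ih2 K hK
        simp only [List.sum_cons, List.length_cons] at h1 h2 ⊢
        exact ⟨by omega, by omega, fun _ => h3 (by simp)⟩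

lemma coars_omegaW : ∀ I : List ℕ, coars (omegaW I) = (coars I).map omegaW := by
  intro I
  induction I using coars.induct with
  | case1 => simp [coars, omegaW]
  | case2 a => simp [coars, omegaW]
  | case3 a b l ih1 ih2 =>
      show coars ((a+1) :: b :: l) = _
      rw [coars_cons_cons, coars_cons_cons a b l, List.map_append, List.map_map]
      congr 1
      · have : a + 1 + b = a + b + 1 := by omega
        rw [this]
        exact ih2

lemma mf_ne_nil (a : ℕ) (B : List ℕ) : mf a B ≠ [] := by
  cases B <;> simp [mf]

lemma glue_ne_nil (A B : List ℕ) (hB : B ≠ []) : glue A B ≠ [] := by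
  match A with
  | [] => exact hB
  | [a] => exact mf_ne_nil a B
  | a :: x :: t => simp [glue]

lemma mf_glue (a x : ℕ) (t B : List ℕ) :
    mf a (glue (x :: t) B) = glue ((a + x) :: t) B := by
  match t with
  | [] =>
      cases B with
      | nil => simp [glue, mf]
      | cons b B' => simp [glue, mf]; omega
  | y :: t' => simp [glue, mf]

lemma srib_mul_aux : ∀ n : ℕ, ∀ A B : List ℕ, A.length ≤ n → A ≠ [] → B ≠ [] →
    srib A * srib B = srib (A ++ B) - srib (glue A B) := by
  intro n
  induction n with
  | zero =>
      intro A B hA hA' _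
      exact absurd (List.length_eq_zero_iff.mp (Nat.le_zero.mp hA)) hA'
  | succ n ih =>
      intro A B hA hA' hB
      match A with
      | [a] =>
          rw [srib_singleton, show ([a] ++ B) = a :: B from rfl,
            srib_cons' a B hB, show glue [a] B = mf a B from rfl]
          simp [neg_mul]
      | a :: x :: t =>
          have hlen : (x :: t).length ≤ n := by simp at hA ⊢; omega
          have hlen2 : ((a+x) :: t).length ≤ n := by simp at hA ⊢; omega
          have h1 : srib (a :: x :: t) = -(Sw [a] * srib (x :: t)) + srib ((a+x) :: t) := by
            rw [srib_cons' a (x :: t) (by simp)]; rfl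
          rw [h1, add_mul, neg_mul, mul_assoc,
            ih (x :: t) B hlen (by simp) hB, ih ((a+x) :: t) B hlen2 (by simp) hB,
            show (a :: x :: t) ++ B = a :: ((x :: t) ++ B) from rfl,
            srib_cons' a ((x :: t) ++ B) (by simp),
            show mf a ((x :: t) ++ B) = ((a+x) :: t) ++ B from rfl,
            show glue (a :: x :: t) B = a :: glue (x :: t) B from rfl,
            srib_cons' a (glue (x :: t) B) (glue_ne_nil _ _ hB),
            mf_glue]
          simp only [mul_sub]
          abel

lemma srib_mul (A B : List ℕ) (hA : A ≠ []) (hB : B ≠ []) :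
    srib A * srib B = srib (A ++ B) - srib (glue A B) :=
  srib_mul_aux A.length A B le_rfl hA hB

lemma glue_length : ∀ (A B : List ℕ), A ≠ [] → B ≠ [] →
    (glue A B).length + 1 = A.length + B.length := by
  intro A
  induction A with
  | nil => intro B hA; exact absurd rfl hA
  | cons a t ih =>
      intro B _ hB
      cases t with
      | nil => cases B with
        | nil => exact absurd rfl hB
        | cons b s => simp [glue, mf]; omega
      | cons x t' =>
          have := ih B (by simp) hB
          simp only [glue, List.length_cons] at this ⊢
          omega

lemma glue_sum : ∀ (A B : List ℕ), (glue A B).sum = A.sum + B.sum := by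
  intro A
  induction A with
  | nil => intro B; simp [glue]
  | cons a t ih =>
      intro B
      cases t with
      | nil => cases B <;> simp [glue, mf] <;> omega
      | cons x t' =>
          have := ih B
          simp only [glue, List.sum_cons] at this ⊢
          omega

lemma glue_pos : ∀ (A B : List ℕ), (∀ i ∈ A, 0 < i) → (∀ i ∈ B, 0 < i) →
    ∀ i ∈ glue A B, 0 < i := by
  intro A
  induction A with
  | nil => intro B _ hB; simpa [glue] using hB
  | cons a t ih =>
      intro B hA hB i hi
      cases t with
      | nil =>
          cases B with
          | nil => simp [glue, mf] at hi; exact hi ▸ hA a (by simp)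
          | cons b s =>
              simp [glue, mf] at hi
              rcases hi with rfl | hi
              · have := hA a (by simp); omega
              · exact hB i (by simp [hi])
      | cons x t' =>
          simp only [glue, List.mem_cons] at hi
          rcases hi with rfl | hi
          · exact hA i (by simp)
          · exact ih B (fun j hj => hA j (by simp [hj])) hB i hi

lemma omegaW_ne_nil (I : List ℕ) : omegaW I ≠ [] := by cases I <;> simp [omegaW]

lemma omegaW_length (I : List ℕ) (hI : I ≠ []) : (omegaW I).length = I.length := by
  cases I with | nil => exact absurd rfl hI | cons a l => simp [omegaW]

lemma omegaW_sum (I : List ℕ) : (omegaW I).sum = I.sum + 1 := by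
  cases I <;> simp [omegaW] <;> omega

lemma omegaW_pos (I : List ℕ) (hI : ∀ i ∈ I, 0 < i) : ∀ i ∈ omegaW I, 0 < i := by
  cases I with
  | nil => simp [omegaW]
  | cons a l =>
      intro i hi
      simp [omegaW] at hi
      rcases hi with rfl | hi
      · omega
      · exact hI i (by simp [hi])

lemma omegaW_append (K L : List ℕ) (hK : K ≠ []) : omegaW (K ++ L) = omegaW K ++ L := by
  cases K with | nil => exact absurd rfl hK | cons a t => simp [omegaW]

lemma mf_one (I : List ℕ) (hI : I ≠ []) : mf 1 I = omegaW I := by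
  cases I with
  | nil => exact absurd rfl hI
  | cons a l => simp [mf, omegaW]; omega

lemma Rib_eq (I : List ℕ) : Rib I = ((-1 : RatFunc ℚ)^I.length) • srib I := by
  unfold Rib srib sribL
  rw [List.smul_sum, List.map_map]
  congr 1
  refine List.map_congr_left fun K hK => ?_
  obtain ⟨-, h2, -⟩ := coars_facts I K hK
  show _ = (-1 : RatFunc ℚ)^I.length • ((-1 : RatFunc ℚ)^K.length • Sw K)
  rw [smul_smul, ← pow_add]
  congr 1
  have h : I.length + K.length = (I.length - K.length) + 2*K.length := by omega
  rw [h, pow_add, pow_mul, neg_one_sq, one_pow, mul_one]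

lemma Rib_nil : Rib [] = 1 := by
  rw [Rib_eq, srib_nil]; simp

lemma Rib_one : Rib [1] = Sw [1] := by
  rw [Rib_eq, srib_singleton]; simp

lemma Rib_mul (A B : List ℕ) (hA : A ≠ []) (hB : B ≠ []) :
    Rib A * Rib B = Rib (A ++ B) + Rib (glue A B) := by
  have hg : (glue A B).length + 1 = A.length + B.length := glue_length A B hA hB
  rw [Rib_eq A, Rib_eq B, Rib_eq (A ++ B), Rib_eq (glue A B)]
  rw [smul_mul_smul_comm, srib_mul A B hA hB, ← pow_add, List.length_append, smul_sub]
  congr 1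
  rw [← hg, pow_succ]
  simp

lemma Xpow_sub_one_ne (k : ℕ) (hk : 1 ≤ k) : (RatFunc.X : RatFunc ℚ)^k - 1 ≠ 0 := by
  have h1 : ((RatFunc.X : RatFunc ℚ))^k - 1 = algebraMap (Polynomial ℚ) (RatFunc ℚ) (Polynomial.X^k - 1) := by
    simp [map_sub, map_pow]
  rw [h1]
  intro h
  have h0 : (Polynomial.X^k - 1 : Polynomial ℚ) = 0 :=
    RatFunc.algebraMap_injective ℚ (by rw [map_zero]; exact h)
  exact Polynomial.X_pow_sub_C_ne_zero (by omega : 0 < k) (1:ℚ) (by rwa [Polynomial.C_1])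

lemma Bq_add_left (x x' y : NSym) : Bq (x + x') y = Bq x y + Bq x' y := by
  unfold Bq
  rw [MonoidAlgebra.coeff_add, Finsupp.sum_add_index']
  · intro i; simp
  · intros; simp [add_mul, add_smul, Finsupp.sum_add]; abel

lemma Bq_smul_left (c : RatFunc ℚ) (x y : NSym) : Bq (c • x) y = c • Bq x y := by
  unfold Bq
  rw [MonoidAlgebra.coeff_smul, Finsupp.sum_smul_index (by intro i; simp), Finsupp.smul_sum]
  refine Finsupp.sum_congr ?_
  intro I _
  rw [Finsupp.smul_sum]
  refine Finsupp.sum_congr ?_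
  intro J _
  rw [smul_smul]
  congr 1
  ring

lemma Bq_add_right (x y y' : NSym) : Bq x (y + y') = Bq x y + Bq x y' := by
  unfold Bq
  rw [MonoidAlgebra.coeff_add, ← Finsupp.sum_add]
  refine Finsupp.sum_congr ?_
  intro I _
  rw [Finsupp.sum_add_index']
  · intro i; simp
  · intros; simp [mul_add, add_mul, add_smul]; abel

lemma Bq_smul_right (c : RatFunc ℚ) (x y : NSym) : Bq x (c • y) = c • Bq x y := by
  unfold Bq
  rw [MonoidAlgebra.coeff_smul, Finsupp.smul_sum]
  refine Finsupp.sum_congr ?_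
  intro I _
  rw [Finsupp.sum_smul_index (by intro i; simp), Finsupp.smul_sum]
  refine Finsupp.sum_congr ?_
  intro J _
  rw [smul_smul]
  congr 1
  ring

lemma Bq_zero_left (y : NSym) : Bq 0 y = 0 := by
  unfold Bq; rw [MonoidAlgebra.coeff_zero]; exact Finsupp.sum_zero_index

lemma Bq_zero_right (x : NSym) : Bq x 0 = 0 := by
  unfold Bq
  calc Finsupp.sum x.coeff _ = Finsupp.sum x.coeff (fun _ _ => (0:NSym)) :=
        Finsupp.sum_congr (fun I _ => by rw [MonoidAlgebra.coeff_zero]; exact Finsupp.sum_zero_index)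
    _ = 0 := Finset.sum_const_zero

lemma Bq_listsum_left (l : List NSym) (y : NSym) : Bq l.sum y = (l.map (Bq · y)).sum := by
  induction l with
  | nil => simp [Bq_zero_left]
  | cons x xs ih => simp [Bq_add_left, ih]

lemma Bq_listsum_right (x : NSym) (l : List NSym) : Bq x l.sum = (l.map (Bq x ·)).sum := by
  induction l with
  | nil => simp [Bq_zero_right]
  | cons z xs ih => simp [Bq_add_right, ih]

lemma Bq_single (K L : List ℕ) :
    Bq (Sw K) (Sw L) = ((RatFunc.X : RatFunc ℚ)^(K.sum + L.sum + 1) - 1)⁻¹ •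
      (Sw (1 :: (K ++ L)) + ((RatFunc.X : RatFunc ℚ)^K.sum - 1) • Sw (omegaW (K ++ L))) := by
  unfold Bq Sw
  rw [MonoidAlgebra.coeff_single, MonoidAlgebra.coeff_single, Finsupp.sum_single_index, Finsupp.sum_single_index] <;> simp [FreeMonoid.toList_ofList]



lemma listsum_add {α : Type*} (l : List α) (u v : α → NSym) :
    (l.map fun x => u x + v x).sum = (l.map u).sum + (l.map v).sum := by
  induction l with
  | nil => simp
  | cons x t ih => simp [ih]; abel

lemma listsum_mul_left {α : Type*} (l : List α) (M : NSym) (f : α → NSym) :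
    (l.map fun x => M * f x).sum = M * (l.map f).sum := by
  induction l with
  | nil => simp
  | cons x t ih => simp [ih, mul_add]

lemma listsum_mul_right {α : Type*} (l : List α) (M : NSym) (f : α → NSym) :
    (l.map fun x => f x * M).sum = (l.map f).sum * M := by
  induction l with
  | nil => simp
  | cons x t ih => simp [ih, add_mul]

lemma listsum_smul {α : Type*} (l : List α) (c : RatFunc ℚ) (f : α → NSym) :
    (l.map fun x => c • f x).sum = c • (l.map f).sum := by
  induction l with
  | nil => simp
  | cons x t ih => simp [ih, smul_add]

lemma srib_omega (I : List ℕ) (hI : I ≠ []) :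
    srib (omegaW I)
      = ((coars I).map fun K => ((-1 : RatFunc ℚ)^K.length) • Sw (omegaW K)).sum := by
  unfold srib sribL
  rw [coars_omegaW, List.map_map]
  refine congrArg _ (List.map_congr_left fun K hK => ?_)
  obtain ⟨-, -, h3⟩ := coars_facts I K hK
  show ((-1 : RatFunc ℚ)^(omegaW K).length) • Sw (omegaW K) = _
  rw [omegaW_length K (h3 hI)]

lemma Sw_one_mul_srib (I : List ℕ) (hI : I ≠ []) :
    Sw [1] * srib I = srib (omegaW I) - srib (1 :: I) := by
  have h := srib_cons' 1 I hI
  rw [mf_one I hI] at h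
  rw [h]
  abel

lemma Bq_Sw_srib (K J : List ℕ) (hK : K ≠ []) :
    Bq (Sw K) (srib J)
      = ((RatFunc.X : RatFunc ℚ)^(K.sum + J.sum + 1) - 1)⁻¹ •
        ((Sw [1] * Sw K + ((RatFunc.X : RatFunc ℚ)^K.sum - 1) • Sw (omegaW K)) * srib J) := by
  conv_lhs => rw [srib, sribL, Bq_listsum_right, List.map_map]
  conv_rhs => rw [srib, sribL, ← listsum_mul_left, ← listsum_smul]
  refine congrArg _ (List.map_congr_left fun L hL => ?_)
  obtain ⟨hsum, -, -⟩ := coars_facts J L hL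
  show Bq (Sw K) (((-1 : RatFunc ℚ)^L.length) • Sw L) = _
  rw [Bq_smul_right, Bq_single, hsum]
  rw [mul_smul_comm, smul_comm ((-1 : RatFunc ℚ)^L.length)]
  congr 1
  congr 1
  rw [add_mul, smul_mul_assoc, Sw_mul, Sw_mul, Sw_mul, omegaW_append K L hK]
  rfl

lemma Bq_srib (I J : List ℕ) (hI : I ≠ []) :
    Bq (srib I) (srib J)
      = ((RatFunc.X : RatFunc ℚ)^(I.sum + J.sum + 1) - 1)⁻¹ •
        ((((RatFunc.X : RatFunc ℚ)^I.sum) • srib (omegaW I) - srib (1 :: I)) * srib J) := by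
  conv_lhs => rw [show srib I = sribL (coars I) from rfl, sribL, Bq_listsum_left, List.map_map]
  have key : (((RatFunc.X : RatFunc ℚ)^I.sum) • srib (omegaW I) - srib (1 :: I))
      = ((coars I).map fun K => ((-1 : RatFunc ℚ)^K.length) •
          (Sw [1] * Sw K + ((RatFunc.X : RatFunc ℚ)^I.sum - 1) • Sw (omegaW K))).sum := by
    have e1 : ((coars I).map fun K => ((-1 : RatFunc ℚ)^K.length) •
          (Sw [1] * Sw K + ((RatFunc.X : RatFunc ℚ)^I.sum - 1) • Sw (omegaW K))).sum
        = ((coars I).map fun K => ((-1 : RatFunc ℚ)^K.length) • (Sw [1] * Sw K)).sum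
          + ((coars I).map fun K => ((RatFunc.X : RatFunc ℚ)^I.sum - 1) •
              (((-1 : RatFunc ℚ)^K.length) • Sw (omegaW K))).sum := by
      rw [← listsum_add]
      refine congrArg _ (List.map_congr_left fun K _ => ?_)
      rw [smul_add]
      congr 1
      rw [smul_comm]
    rw [e1, listsum_smul]
    have e2 : ((coars I).map fun K => ((-1 : RatFunc ℚ)^K.length) • (Sw [1] * Sw K)).sum
        = Sw [1] * srib I := by
      rw [srib, sribL, ← listsum_mul_left]
      refine congrArg _ (List.map_congr_left fun K _ => ?_)
      rw [mul_smul_comm]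
    rw [e2, ← srib_omega I hI, Sw_one_mul_srib I hI, sub_smul, one_smul]
    abel
  rw [key, ← listsum_mul_right, ← listsum_smul]
  refine congrArg _ (List.map_congr_left fun K hK => ?_)
  obtain ⟨hsum, -, h3⟩ := coars_facts I K hK
  show Bq ((((-1 : RatFunc ℚ)^K.length) • Sw K)) (srib J) = _
  rw [Bq_smul_left, Bq_Sw_srib K J (h3 hI), hsum]
  rw [smul_comm, smul_mul_assoc]

lemma Bq_Rib (I J : List ℕ) (hI : I ≠ []) :
    Bq (Rib I) (Rib J)
      = ((RatFunc.X : RatFunc ℚ)^(I.sum + J.sum + 1) - 1)⁻¹ •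
        ((Rib (1 :: I) + ((RatFunc.X : RatFunc ℚ)^I.sum) • Rib (omegaW I)) * Rib J) := by
  rw [Rib_eq I, Rib_eq J, Bq_smul_left, Bq_smul_right, Bq_srib I J hI,
    Rib_eq (1 :: I), Rib_eq (omegaW I), omegaW_length I hI]
  have collapse : ((-1 : RatFunc ℚ)^(1 :: I : List ℕ).length • srib (1 :: I)
        + ((RatFunc.X : RatFunc ℚ)^I.sum) • (((-1 : RatFunc ℚ)^I.length) • srib (omegaW I)))
      = ((-1 : RatFunc ℚ)^I.length) •
          (((RatFunc.X : RatFunc ℚ)^I.sum) • srib (omegaW I) - srib (1 :: I)) := by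
    rw [List.length_cons, pow_succ, mul_neg_one, neg_smul,
      smul_comm ((RatFunc.X : RatFunc ℚ)^I.sum), smul_sub]
    abel
  rw [collapse, mul_smul_comm, smul_mul_assoc]
  simp only [smul_smul]
  congr 1
  ring

lemma Rib_nil' : Rib [] = Sw [] := by rw [Rib_nil, Sw_nil]

lemma Bq_nil_srib (J : List ℕ) :
    Bq (Sw []) (srib J)
      = ((RatFunc.X : RatFunc ℚ)^(J.sum + 1) - 1)⁻¹ • (Sw [1] * srib J) := by
  conv_lhs => rw [show srib J = sribL (coars J) from rfl, sribL, Bq_listsum_right, List.map_map]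
  conv_rhs => rw [show srib J = sribL (coars J) from rfl, sribL, ← listsum_mul_left, ← listsum_smul]
  refine congrArg _ (List.map_congr_left fun L hL => ?_)
  obtain ⟨hsum, -, -⟩ := coars_facts J L hL
  show Bq (Sw []) (((-1 : RatFunc ℚ)^L.length) • Sw L) = _
  rw [Bq_smul_right, Bq_single, hsum]
  simp only [List.sum_nil, List.nil_append, pow_zero, sub_self, zero_smul, add_zero, zero_add]
  rw [mul_smul_comm, smul_comm, Sw_mul]
  rfl

lemma Bq_Rib_nil (J : List ℕ) :
    Bq (Rib []) (Rib J)
      = ((RatFunc.X : RatFunc ℚ)^(J.sum + 1) - 1)⁻¹ • (Sw [1] * Rib J) := by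
  rw [Rib_eq J, Bq_smul_right, Rib_nil', Bq_nil_srib, mul_smul_comm, smul_comm]

lemma qPoch_zero : qPoch 0 = 1 := by simp [qPoch]

lemma qPoch_succ (n : ℕ) : qPoch (n+1) = qPoch n * ((RatFunc.X : RatFunc ℚ)^(n+1) - 1) := by
  rw [qPoch, qPoch, Finset.prod_Icc_succ_top (by omega)]

lemma qPoch_ne_zero (n : ℕ) : qPoch n ≠ 0 := by
  rw [qPoch]
  refine Finset.prod_ne_zero_iff.mpr fun k hk => ?_
  exact Xpow_sub_one_ne k (by simp at hk; omega)

lemma natPoly_add (p q : Polynomial ℕ) : natPoly (p + q) = natPoly p + natPoly q := by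
  simp [natPoly, Polynomial.map_add]

lemma natPoly_mul (p q : Polynomial ℕ) : natPoly (p * q) = natPoly p * natPoly q := by
  simp [natPoly, Polynomial.map_mul]

lemma natPoly_one : natPoly 1 = 1 := by simp [natPoly]

lemma natPoly_zero : natPoly 0 = 0 := by simp [natPoly]

lemma natPoly_Xpow (k : ℕ) : natPoly (Polynomial.X ^ k) = (RatFunc.X : RatFunc ℚ)^k := by
  rw [natPoly, Polynomial.map_pow, Polynomial.map_X, map_pow, RatFunc.algebraMap_X]

def G : ℕ → ℕ → Polynomial ℕ
  | 0, _ => 1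
  | _+1, 0 => 1
  | p+1, q+1 => G p (q+1) + Polynomial.X^(p+1) * G (p+1) q
termination_by p q => p + q

lemma G_spec : ∀ p q : ℕ, natPoly (G p q) * (qPoch p * qPoch q) = qPoch (p + q) := by
  intro p q
  induction p, q using G.induct with
  | case1 q => rw [show G 0 q = 1 from by rw [G], natPoly_one, qPoch_zero]; ring_nf
  | case2 p => rw [show G (p+1) 0 = 1 from by rw [G], natPoly_one, qPoch_zero]; ring_nf
  | case3 p q ih1 ih2 =>
      rw [show G (p+1) (q+1) = G p (q+1) + Polynomial.X^(p+1) * G (p+1) q from by rw [G],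
        natPoly_add, natPoly_mul, natPoly_Xpow]
      have e : p + 1 + (q + 1) = (p + q + 1) + 1 := by omega
      rw [e, qPoch_succ (p+q+1)]
      have e1 : p + (q + 1) = p + q + 1 := by omega
      have e2 : p + 1 + q = p + q + 1 := by omega
      rw [e1] at ih1
      rw [e2] at ih2
      rw [qPoch_succ p, qPoch_succ q] at *
      linear_combination ((RatFunc.X : RatFunc ℚ)^(p+1) - 1) * ih1
        + (RatFunc.X : RatFunc ℚ)^(p+1) * ((RatFunc.X : RatFunc ℚ)^(q+1) - 1) * ih2

def Pos (n : ℕ) (x : NSym) : Prop :=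
  ∃ c : Composition n → Polynomial ℕ, x = ∑ I : Composition n, natPoly (c I) • Rib I.blocks

lemma Pos.zero (n : ℕ) : Pos n 0 :=
  ⟨0, by simp [natPoly_zero]⟩

lemma Pos.add {n : ℕ} {x y : NSym} (hx : Pos n x) (hy : Pos n y) : Pos n (x + y) := by
  obtain ⟨c, rfl⟩ := hx
  obtain ⟨d, rfl⟩ := hy
  refine ⟨c + d, ?_⟩
  rw [← Finset.sum_add_distrib]
  exact Finset.sum_congr rfl fun I _ => by simp [natPoly_add, add_smul]

lemma Pos.psmul {n : ℕ} {x : NSym} (p : Polynomial ℕ) (hx : Pos n x) :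
    Pos n (natPoly p • x) := by
  obtain ⟨c, rfl⟩ := hx
  refine ⟨fun I => p * c I, ?_⟩
  rw [Finset.smul_sum]
  exact Finset.sum_congr rfl fun I _ => by rw [smul_smul, natPoly_mul]

lemma Pos.rib {n : ℕ} (I : Composition n) : Pos n (Rib I.blocks) := by
  classical
  refine ⟨fun J => if J = I then 1 else 0, ?_⟩
  simp only [apply_ite natPoly, natPoly_one, natPoly_zero, ite_smul, one_smul, zero_smul]
  rw [Finset.sum_ite_eq' Finset.univ I]
  simp

lemma Pos.ribL {n : ℕ} (L : List ℕ) (h1 : ∀ i ∈ L, 0 < i) (h2 : L.sum = n) :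
    Pos n (Rib L) :=
  Pos.rib (⟨L, fun hi => h1 _ hi, h2⟩ : Composition n)

lemma Pos.sum {n : ℕ} {α : Type*} (s : Finset α) (f : α → NSym)
    (h : ∀ i ∈ s, Pos n (f i)) : Pos n (∑ i ∈ s, f i) := by
  classical
  induction s using Finset.induction with
  | empty => simpa using Pos.zero n
  | insert _ _ hx ih =>
      rw [Finset.sum_insert hx]
      exact Pos.add (h _ (by simp)) (ih fun i hi => h i (by simp [hi]))

lemma Bq_finsum_left {α : Type*} (s : Finset α) (f : α → NSym) (y : NSym) :
    Bq (∑ i ∈ s, f i) y = ∑ i ∈ s, Bq (f i) y := by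
  classical
  induction s using Finset.induction with
  | empty => simp [Bq_zero_left]
  | insert _ _ hx ih => rw [Finset.sum_insert hx, Bq_add_left, ih, Finset.sum_insert hx]

lemma Bq_finsum_right {α : Type*} (s : Finset α) (f : α → NSym) (x : NSym) :
    Bq x (∑ i ∈ s, f i) = ∑ i ∈ s, Bq x (f i) := by
  classical
  induction s using Finset.induction with
  | empty => simp [Bq_zero_right]
  | insert _ _ hx ih => rw [Finset.sum_insert hx, Bq_add_right, ih, Finset.sum_insert hx]

lemma step_pos (a b : ℕ) (I : Composition a) (J : Composition b) :
    Pos (a + b + 1)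
      ((qPoch (a + b + 1) * (qPoch a)⁻¹ * (qPoch b)⁻¹) • Bq (Rib I.blocks) (Rib J.blocks)) := by
  have hIs : I.blocks.sum = a := I.blocks_sum
  have hJs : J.blocks.sum = b := J.blocks_sum
  have hIp : ∀ i ∈ I.blocks, 0 < i := fun i hi => I.blocks_pos hi
  have hJp : ∀ i ∈ J.blocks, 0 < i := fun i hi => J.blocks_pos hi
  have hXn : ((RatFunc.X : RatFunc ℚ)^(a+b+1) - 1) ≠ 0 := Xpow_sub_one_ne _ (by omega)
  by_cases hI : I.blocks = []
  · -- a = 0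
    have ha : a = 0 := by rw [← hIs, hI]; rfl
    subst ha
    rw [hI, Bq_Rib_nil, hJs]
    have scal : qPoch (0 + b + 1) * (qPoch 0)⁻¹ * (qPoch b)⁻¹ *
        ((RatFunc.X : RatFunc ℚ)^(b+1) - 1)⁻¹ = 1 := by
      have : (0 : ℕ) + b + 1 = b + 1 := by omega
      rw [this, qPoch_succ b, qPoch_zero]
      field_simp [qPoch_ne_zero b, Xpow_sub_one_ne (b+1) (by omega)]
    rw [smul_smul, scal, one_smul]
    by_cases hJ : J.blocks = []
    · have hb : b = 0 := by rw [← hJs, hJ]; rfl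
      subst hb
      rw [hJ, Rib_nil, mul_one, ← Rib_one]
      exact Pos.ribL [1] (by simp) (by simp)
    · rw [← Rib_one, Rib_mul [1] J.blocks (by simp) hJ,
        show glue [1] J.blocks = mf 1 J.blocks from rfl, mf_one _ hJ]
      refine Pos.add (Pos.ribL _ ?_ ?_) (Pos.ribL _ ?_ ?_)
      · intro i hi
        simp at hi
        rcases hi with rfl | hi
        · omega
        · exact hJp i hi
      · simp [hJs]; omega
      · exact omegaW_pos _ hJp
      · rw [omegaW_sum, hJs]; omega
  · rw [Bq_Rib _ _ hI, hIs, hJs, smul_smul]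
    have scal : qPoch (a + b + 1) * (qPoch a)⁻¹ * (qPoch b)⁻¹ *
        ((RatFunc.X : RatFunc ℚ)^(a+b+1) - 1)⁻¹ = natPoly (G a b) := by
      rw [qPoch_succ (a+b), ← G_spec a b]
      field_simp [qPoch_ne_zero a, qPoch_ne_zero b, hXn]
    rw [scal]
    refine Pos.psmul _ ?_
    by_cases hJ : J.blocks = []
    · have hb : b = 0 := by rw [← hJs, hJ]; rfl
      subst hb
      rw [hJ, Rib_nil, mul_one, ← natPoly_Xpow]
      refine Pos.add (Pos.ribL _ ?_ ?_) (Pos.psmul _ (Pos.ribL _ ?_ ?_))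
      · intro i hi
        simp at hi
        rcases hi with rfl | hi
        · omega
        · exact hIp i hi
      · simp [hIs]; omega
      · exact omegaW_pos _ hIp
      · rw [omegaW_sum, hIs]
    · rw [add_mul, Rib_mul _ _ (by simp) hJ, smul_mul_assoc,
        Rib_mul _ _ (omegaW_ne_nil _) hJ, ← natPoly_Xpow]
      refine Pos.add (Pos.add (Pos.ribL _ ?_ ?_) (Pos.ribL _ ?_ ?_))
        (Pos.psmul _ (Pos.add (Pos.ribL _ ?_ ?_) (Pos.ribL _ ?_ ?_)))
      · intro i hi; simp at hi; rcases hi with rfl | hi | hi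
        · omega
        · exact hIp i hi
        · exact hJp i hi
      · simp [hIs, hJs]; omega
      · refine glue_pos _ _ ?_ hJp
        intro i hi
        simp at hi
        rcases hi with rfl | hi
        · omega
        · exact hIp i hi
      · rw [glue_sum]; simp [hIs, hJs]; omega
      · intro i hi
        rw [List.mem_append] at hi
        rcases hi with hi | hi
        · exact omegaW_pos _ hIp i hi
        · exact hJp i hi
      · rw [List.sum_append, omegaW_sum, hIs, hJs]; omega
      · exact glue_pos _ _ (omegaW_pos _ hIp) hJp
      · rw [glue_sum, omegaW_sum, hIs, hJs]; omega

lemma main_pos (g : ℕ → NSym) (h0 : g 0 = 1)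
    (hrec : ∀ n : ℕ, 1 ≤ n → g n = ∑ p ∈ Finset.HasAntidiagonal.antidiagonal (n - 1), Bq (g p.1) (g p.2)) :
    ∀ n : ℕ, Pos n (qPoch n • g n) := by
  intro n
  induction n using Nat.strong_induction_on with
  | _ n ih =>
    cases n with
    | zero =>
        rw [qPoch_zero, h0, one_smul, ← Rib_nil]
        exact Pos.ribL [] (by simp) (by simp)
    | succ n =>
        rw [hrec (n+1) (by omega), Finset.smul_sum]
        refine Pos.sum _ _ fun p hp => ?_
        obtain ⟨a, b⟩ := p
        rw [Finset.HasAntidiagonal.mem_antidiagonal] at hp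
        have hp' : a + b = n := by simpa using hp
        obtain ⟨ca, hca⟩ := ih a (by omega)
        obtain ⟨cb, hcb⟩ := ih b (by omega)
        have hga : g a = (qPoch a)⁻¹ • ∑ I : Composition a, natPoly (ca I) • Rib I.blocks := by
          rw [← hca, inv_smul_smul₀ (qPoch_ne_zero a)]
        have hgb : g b = (qPoch b)⁻¹ • ∑ J : Composition b, natPoly (cb J) • Rib J.blocks := by
          rw [← hcb, inv_smul_smul₀ (qPoch_ne_zero b)]
        rw [hga, hgb]
        simp only [Bq_smul_left, Bq_smul_right, Bq_finsum_left, Bq_finsum_right,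
          Finset.smul_sum, smul_smul]
        refine Pos.sum _ _ fun J _ => Pos.sum _ _ fun I _ => ?_
        have key := Pos.psmul (ca I * cb J) (step_pos a b I J)
        rw [smul_smul, natPoly_mul] at key
        have hn1 : n + 1 = a + b + 1 := by omega
        rw [hn1]
        convert key using 2
        ring

/-- **Ribbon formula for `B_q` and positivity.** On the ribbon basis,
`B_q(R_I, R_J) = (R_{1I} + q^{|I|} R_{1▷I}) R_J / (q^{|I|+|J|+1} - 1)` for compositions
`I`, `J`; consequently, for the solution `g` of `g = 1 + B_q(g,g)`, the coefficients of
`g̃_n = (q;q)_n g_n` on the ribbon basis lie in `ℕ[q]`. -/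
theorem Bq_ribbon_formula_and_positivity :
    (∀ I J : List ℕ, I ≠ [] → J ≠ [] → (∀ i ∈ I, 1 ≤ i) → (∀ j ∈ J, 1 ≤ j) →
      Bq (Rib I) (Rib J) =
        ((RatFunc.X : RatFunc ℚ) ^ (I.sum + J.sum + 1) - 1)⁻¹ •
          ((Rib (1 :: I) + ((RatFunc.X : RatFunc ℚ) ^ I.sum) • Rib (omegaW I)) * Rib J)) ∧
    (∀ g : ℕ → NSym, g 0 = 1 →
      (∀ n : ℕ, 1 ≤ n →
        g n = ∑ p ∈ Finset.HasAntidiagonal.antidiagonal (n - 1), Bq (g p.1) (g p.2)) →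
      ∀ n : ℕ, ∃ c : Composition n → Polynomial ℕ,
        qPoch n • g n = ∑ I : Composition n, natPoly (c I) • Rib I.blocks) := by
  constructor
  · intro I J hI _ _ _
    exact Bq_Rib I J hI
  · intro g h0 hrec n
    exact main_pos g h0 hrec n
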